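/- Let R be a commutative noetherian ring and let p and q be prime ideals of R with q ⊄ p. Then for every R-module X one has E(R/q) ⊗_R Hom_R(E(R/p), X) = 0. -/

import Mathlib

open CategoryTheory

universe u

/-- The `a`-torsion submodule `Γ_a(M) = {x ∈ M | a^n x = 0 for some n}`. -/
def torsionGamma {R : Type u} [CommRing R] (a : Ideal R) (M : Type u)
    [AddCommGroup M] [Module R M] : Submodule R M :=
  ⨆ n : ℕ, Submodule.torsionBySet R M ((a ^ n : Ideal R) : Set R)

/-- Data witnessing that `G` is Gorenstein injective: a ℤ-indexed exact complex of
injective modules, remaining exact after `Hom_R(E', -)` for every injective `E'`,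
with `G ≅ ker(E_0 → E_{-1})`. -/
structure GorensteinInjData (R : Type u) [CommRing R] (G : Type u)
    [AddCommGroup G] [Module R G] where
  E : ℤ → Type u
  [acg : ∀ i, AddCommGroup (E i)]
  [mod : ∀ i, Module R (E i)]
  d : ∀ i : ℤ, E (i + 1) →ₗ[R] E i
  inj : ∀ i, Module.Injective R (E i)
  exact : ∀ i : ℤ, LinearMap.range (d (i + 1)) = LinearMap.ker (d i)
  homExact : ∀ (E' : Type u) [AddCommGroup E'] [Module R E'], Module.Injective R E' →
      ∀ (i : ℤ) (g : E' →ₗ[R] E (i + 1)),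
        (d i).comp g = 0 ↔ ∃ f : E' →ₗ[R] E (i + 1 + 1), (d (i + 1)).comp f = g
  equiv : G ≃ₗ[R] LinearMap.ker (d (-1))

/-- An `R`-module `G` is Gorenstein injective. -/
def IsGorensteinInjective (R : Type u) [CommRing R] (G : Type u)
    [AddCommGroup G] [Module R G] : Prop :=
  Nonempty (GorensteinInjData R G)

/-- Data witnessing that `M` is Gorenstein flat. -/
structure GorensteinFlatData (R : Type u) [CommRing R] (M : Type u)
    [AddCommGroup M] [Module R M] where
  F : ℤ → Type u
  [acg : ∀ i, AddCommGroup (F i)]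
  [mod : ∀ i, Module R (F i)]
  d : ∀ i : ℤ, F (i + 1) →ₗ[R] F i
  flat : ∀ i, Module.Flat R (F i)
  exact : ∀ i : ℤ, LinearMap.range (d (i + 1)) = LinearMap.ker (d i)
  tensorExact : ∀ (E' : Type u) [AddCommGroup E'] [Module R E'], Module.Injective R E' →
      ∀ i : ℤ, LinearMap.range (LinearMap.lTensor E' (d (i + 1)))
        = LinearMap.ker (LinearMap.lTensor E' (d i))
  equiv : M ≃ₗ[R] LinearMap.ker (d (-1))

/-- An `R`-module `M` is Gorenstein flat. -/
def IsGorensteinFlat (R : Type u) [CommRing R] (M : Type u)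
    [AddCommGroup M] [Module R M] : Prop :=
  Nonempty (GorensteinFlatData R M)

/-- `E` is an injective hull of `M`: `E` is injective and admits an injective
linear map from `M` with essential image. -/
def IsInjectiveHull (R : Type u) [CommRing R] (M : Type u) [AddCommGroup M] [Module R M]
    (E : Type u) [AddCommGroup E] [Module R E] : Prop :=
  Module.Injective R E ∧ ∃ f : M →ₗ[R] E, Function.Injective f ∧
    ∀ N : Submodule R E, N ≠ ⊥ → N ⊓ LinearMap.range f ≠ ⊥

/-- `D` is a dualizing module for `R`: finitely generated, of finite injective dimension,
the homothety map `R → Hom_R(D,D)` is bijective, and `Ext^i_R(D,D) = 0` for `i ≥ 1`. -/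
def IsDualizingModule (R : Type u) [CommRing R] (D : Type u)
    [AddCommGroup D] [Module R D] : Prop :=
  Module.Finite R D ∧
  (∃ n : ℕ, ∀ (M : Type u) (_ : AddCommGroup M) (_ : Module R M), ∀ i : ℕ, n < i →
      Limits.IsZero (((Ext R (ModuleCat.{u} R) i).obj
        (Opposite.op (ModuleCat.of R M))).obj (ModuleCat.of R D))) ∧
  Function.Bijective (fun r : R => (r • (LinearMap.id : D →ₗ[R] D))) ∧
  (∀ i : ℕ, 0 < i →
    Limits.IsZero (((Ext R (ModuleCat.{u} R) i).obj
      (Opposite.op (ModuleCat.of R D))).obj (ModuleCat.of R D)))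

/-- The height of a prime ideal, as the `Order.height` of the corresponding
point of the prime spectrum. -/
noncomputable def idealHeight {R : Type u} [CommRing R] (p : Ideal R) (hp : p.IsPrime) : ℕ∞ :=
  Order.height (⟨p, hp⟩ : PrimeSpectrum R)


/-- auxiliary: in an injective hull of `R/p`, smul by `r ∉ p` is injective. -/
theorem aux_smul_injective {R : Type u} [CommRing R] (p : Ideal R) [p.IsPrime] (r : R) (hrp : r ∉ p)
    (Ep : Type u) [AddCommGroup Ep] [Module R Ep] (hEp :
      Module.Injective R Ep ∧ ∃ f : (R ⧸ p) →ₗ[R] Ep, Function.Injective f ∧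
        ∀ N : Submodule R Ep, N ≠ ⊥ → N ⊓ LinearMap.range f ≠ ⊥) :
    ∀ x : Ep, r • x = 0 → x = 0 := by
  obtain ⟨-, f, hfinj, hess⟩ := hEp
  intro x hx
  by_contra hx0
  have hN : (R ∙ x) ≠ ⊥ := by
    simpa [Submodule.span_singleton_eq_bot] using hx0
  obtain ⟨y, hy, hy0⟩ := Submodule.ne_bot_iff _ |>.mp (hess _ hN)
  obtain ⟨hy1, a, ha⟩ := hy
  obtain ⟨s, rfl⟩ := Submodule.mem_span_singleton.mp hy1
  have hra : f (r • a) = 0 := by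
    rw [map_smul, ha, smul_comm, hx, smul_zero]
  have : r • a = 0 := by
    apply hfinj; rw [hra, map_zero]
  obtain ⟨a', rfl⟩ := Ideal.Quotient.mk_surjective a
  have hmem : r * a' ∈ p := by
    have h2 : Ideal.Quotient.mk p (r * a') = 0 := by
      rw [← smul_eq_mul]; exact (Submodule.Quotient.mk_smul p r a').trans this
    rwa [Ideal.Quotient.eq_zero_iff_mem] at h2
  have : a' ∈ p := ((Ideal.isPrime_iff.mp inferInstance).2 hmem).resolve_left hrp
  have : f (Ideal.Quotient.mk p a') = 0 := by
    rw [Ideal.Quotient.eq_zero_iff_mem.mpr this, map_zero]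
  exact hy0 (by rw [← ha, this])

/-- In Noetherian setting, every element of an injective hull of `R/q` is killed by
a power of any `r ∈ q`. -/
theorem aux_torsion {R : Type u} [CommRing R] [IsNoetherianRing R] (q : Ideal R) (r : R) (hrq : r ∈ q)
    (Eq' : Type u) [AddCommGroup Eq'] [Module R Eq'] (hEq :
      Module.Injective R Eq' ∧ ∃ f : (R ⧸ q) →ₗ[R] Eq', Function.Injective f ∧
        ∀ N : Submodule R Eq', N ≠ ⊥ → N ⊓ LinearMap.range f ≠ ⊥)
    (e : Eq') : ∃ n : ℕ, r ^ n • e = 0 := by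
  obtain ⟨-, f, hfinj, hess⟩ := hEq
  -- ascending chain of annihilators
  set I : ℕ →o Submodule R R :=
    ⟨fun n => LinearMap.ker (LinearMap.toSpanSingleton R Eq' (r ^ n • e)), by
      intro m n hmn
      induction n, hmn using Nat.le_induction with
      | base => exact le_rfl
      | succ n hmn ih =>
        refine le_trans ih fun s hs => ?_
        simp only [LinearMap.mem_ker, LinearMap.toSpanSingleton_apply] at hs ⊢
        rw [pow_succ', mul_smul, smul_comm, hs, smul_zero]⟩
  obtain ⟨n₀, hn₀⟩ := (monotone_stabilizes_iff_noetherian.mpr inferInstance) I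
  refine ⟨n₀, ?_⟩
  by_contra hx0
  set x := r ^ n₀ • e with hxdef
  have hN : (R ∙ x) ≠ ⊥ := by simpa [Submodule.span_singleton_eq_bot] using hx0
  obtain ⟨y, hy, hy0⟩ := Submodule.ne_bot_iff _ |>.mp (hess _ hN)
  obtain ⟨hy1, a, ha⟩ := hy
  obtain ⟨s, rfl⟩ := Submodule.mem_span_singleton.mp hy1
  -- r • (s • x) = f (r • a) = 0 since r ∈ q
  obtain ⟨a', rfl⟩ := Ideal.Quotient.mk_surjective a
  have hra : r • (Ideal.Quotient.mk q a') = 0 := by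
    have : Ideal.Quotient.mk q (r • a') = 0 := by
      rw [smul_eq_mul, Ideal.Quotient.eq_zero_iff_mem]
      exact q.mul_mem_right a' hrq
    exact ((Submodule.Quotient.mk_smul q r a').symm).trans this
  have hrsx : r • (s • x) = 0 := by
    rw [← ha, ← map_smul, hra, map_zero]
  -- so s ∈ ann(r^{n₀+1} e) = ann(r^{n₀} e), hence s • x = 0
  have hs1 : s ∈ I (n₀ + 1) := by
    show s ∈ LinearMap.ker (LinearMap.toSpanSingleton R Eq' (r ^ (n₀ + 1) • e))
    simp only [I, LinearMap.mem_ker, LinearMap.toSpanSingleton_apply, OrderHom.coe_mk]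
    rw [pow_succ', mul_smul, smul_comm, ← hxdef]
    exact hrsx
  have hs0 : s ∈ I n₀ := by rw [hn₀ (n₀ + 1) (Nat.le_succ _)]; exact hs1
  have : s • x = 0 := by
    simpa only [I, LinearMap.mem_ker, LinearMap.toSpanSingleton_apply, OrderHom.coe_mk,
      ← hxdef] using (show s ∈ LinearMap.ker (LinearMap.toSpanSingleton R Eq' (r ^ n₀ • e)) from hs0)
  exact hy0 this

/-- smul by `r` surjective on an injective module when it is injective. -/
theorem aux_smul_surjective {R : Type u} [CommRing R] (r : R)
    (Ep : Type u) [AddCommGroup Ep] [Module R Ep] (hinj : Module.Injective R Ep)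
    (hrinj : ∀ x : Ep, r • x = 0 → x = 0) :
    ∃ ψ : Ep →ₗ[R] Ep, ∀ x, ψ (r • x) = x := by
  have hμ : Function.Injective (LinearMap.lsmul R Ep r) := by
    rw [← LinearMap.ker_eq_bot, LinearMap.ker_eq_bot']
    intro m hm
    exact hrinj m hm
  obtain ⟨ψ, hψ⟩ := hinj.out (LinearMap.lsmul R Ep r) hμ LinearMap.id
  exact ⟨ψ, fun x => hψ x⟩

/-- if `q ⊄ p` then `E(R/q) ⊗_R Hom_R(E(R/p), X) = 0`. -/
theorem tensor_injectiveHull_hom_injectiveHull_subsingleton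
    {R : Type u} [CommRing R] [IsNoetherianRing R]
    (p q : Ideal R) [p.IsPrime] [q.IsPrime] (hqp : ¬ q ≤ p)
    (Ep : Type u) [AddCommGroup Ep] [Module R Ep]
    (hEp : IsInjectiveHull R (R ⧸ p) Ep)
    (Eq' : Type u) [AddCommGroup Eq'] [Module R Eq']
    (hEq : IsInjectiveHull R (R ⧸ q) Eq')
    (X : Type u) [AddCommGroup X] [Module R X] :
    Subsingleton (TensorProduct R Eq' (Ep →ₗ[R] X)) := by
  obtain ⟨r, hrq, hrp⟩ := SetLike.not_le_iff_exists.mp hqp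
  obtain ⟨ψ, hψ⟩ := aux_smul_surjective r Ep hEp.1
    (aux_smul_injective p r hrp Ep ⟨hEp.1, hEp.2⟩)
  have hpow : ∀ (n : ℕ) (x : Ep), (ψ ^ n) (r ^ n • x) = x := by
    intro n
    induction n with
    | zero => intro x; simp
    | succ n ih =>
      intro x
      rw [pow_succ r n, mul_smul, pow_succ ψ n]
      show (ψ ^ n) (ψ (r ^ n • (r • x))) = x
      rw [map_smul, hψ, ih]
  refine ⟨fun a b => ?_⟩
  suffices h : ∀ z : TensorProduct R Eq' (Ep →ₗ[R] X), z = 0 by rw [h a, h b]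
  intro z
  induction z using TensorProduct.induction_on with
  | zero => rfl
  | add a b ha hb => rw [ha, hb, add_zero]
  | tmul e fl =>
    obtain ⟨n, hn⟩ := aux_torsion q r hrq Eq' ⟨hEq.1, hEq.2⟩ e
    have hfl : fl = r ^ n • (fl ∘ₗ (ψ ^ n : Ep →ₗ[R] Ep)) := by
      ext x
      simp only [LinearMap.smul_apply, LinearMap.comp_apply]
      rw [← map_smul, ← map_smul, hpow n x]
    rw [hfl, TensorProduct.tmul_smul, TensorProduct.smul_tmul', hn,
      TensorProduct.zero_tmul]
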